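/- arXiv:2111.08905 — 2 statements merged into one kernel-verified Lean document; each statement's English description precedes it below -/
import Mathlib

section
/- Let (tᵢ)ᵢ∈ℕ be nonnegative reals with ∑ᵢ tᵢ = 1, and let (αᵢ)ᵢ∈ℕ be complex numbers. Then ∑_{i≠j} tᵢtⱼ(log⁺|αᵢ| + log⁺|αⱼ| − log|αᵢ−αⱼ|) + 2∑ᵢ tᵢ² log⁺|αᵢ| ≥ −log 2, where terms with αᵢ = αⱼ in the first sum are omitted. -/
lemma logplus_eq (a : ℝ) (ha : 0 ≤ a) :
    Real.log (max a 1) = max (Real.log a) 0 := by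
  rcases le_total 1 a with h | h
  · rw [max_eq_left h, max_eq_left (Real.log_nonneg h)]
  · rw [max_eq_right h, Real.log_one, max_eq_right (Real.log_nonpos ha h)]

lemma key_ineq (a b : ℂ) (hab : a ≠ b) :
    max (Real.log (‖a‖)) 0 + max (Real.log (‖b‖)) 0
      - Real.log (‖a - b‖) ≥ -Real.log 2 := by
  set M := max (‖a‖) 1 with hM
  set N := max (‖b‖) 1 with hN
  have hM1 : (1:ℝ) ≤ M := le_max_right _ _
  have hN1 : (1:ℝ) ≤ N := le_max_right _ _
  have haM : ‖a‖ ≤ M := le_max_left _ _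
  have hbN : ‖b‖ ≤ N := le_max_left _ _
  have habpos : 0 < ‖a - b‖ := by
    rw [norm_pos_iff]
    exact sub_ne_zero.mpr hab
  have h1 : ‖a - b‖ ≤ 2 * (M * N) := by
    have := norm_sub_le a b
    nlinarith
  have h2 : Real.log (‖a - b‖) ≤ Real.log (2 * (M * N)) :=
    Real.log_le_log habpos h1
  have h3 : Real.log (2 * (M * N)) = Real.log 2 + (Real.log M + Real.log N) := by
    rw [Real.log_mul (by norm_num) (by positivity), Real.log_mul (by positivity) (by positivity)]
  rw [← logplus_eq _ (norm_nonneg a), ← logplus_eq _ (norm_nonneg b)]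
  rw [h3] at h2
  linarith

/-- The archimedean energy pairing of the standard measure against a discrete
probability measure `∑ tᵢ δ_{αᵢ}` is bounded below by `−log 2`. -/
theorem archimedean_energy_pairing_lower_bound
    (t : ℕ → ℝ) (ht : ∀ i, 0 ≤ t i) (hsum : ∑' i, t i = 1) (α : ℕ → ℂ) :
    (∑' p : ℕ × ℕ,
        if p.1 ≠ p.2 ∧ α p.1 ≠ α p.2 then
          t p.1 * t p.2 *
            (max (Real.log (‖α p.1‖)) 0
              + max (Real.log (‖α p.2‖)) 0
              - Real.log (‖α p.1 - α p.2‖))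
        else 0)
      + 2 * ∑' i, (t i) ^ 2 * max (Real.log (‖α i‖)) 0
      ≥ -Real.log 2 := by
  set f : ℕ × ℕ → ℝ := fun p =>
    if p.1 ≠ p.2 ∧ α p.1 ≠ α p.2 then
      t p.1 * t p.2 *
        (max (Real.log (‖α p.1‖)) 0
          + max (Real.log (‖α p.2‖)) 0
          - Real.log (‖α p.1 - α p.2‖))
    else 0 with hf_def
  have hlog2 : (0:ℝ) ≤ Real.log 2 := Real.log_nonneg (by norm_num)
  have hS2 : 0 ≤ ∑' i, (t i) ^ 2 * max (Real.log (‖α i‖)) 0 := by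
    apply tsum_nonneg
    intro i
    have : 0 ≤ max (Real.log (‖α i‖)) 0 := le_max_right _ _
    positivity
  by_cases hf : Summable f
  · -- pointwise lower bound
    have hpt : ∀ p : ℕ × ℕ, -Real.log 2 * (t p.1 * t p.2) ≤ f p := by
      intro p
      simp only [hf_def]
      split_ifs with h
      · have hk := key_ineq (α p.1) (α p.2) h.2
        have htt : 0 ≤ t p.1 * t p.2 := mul_nonneg (ht _) (ht _)
        nlinarith
      · have htt : 0 ≤ t p.1 * t p.2 := mul_nonneg (ht _) (ht _)
        nlinarith
    have hts : Summable t := by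
      by_contra h
      rw [tsum_eq_zero_of_not_summable h] at hsum
      norm_num at hsum
    have hg : Summable (fun p : ℕ × ℕ => t p.1 * t p.2) :=
      hts.mul_of_nonneg hts ht ht
    have htg : ∑' p : ℕ × ℕ, t p.1 * t p.2 = 1 := by
      rw [← tsum_mul_tsum_of_summable_norm]
      · rw [hsum]; ring
      · simpa [Real.norm_eq_abs, abs_of_nonneg (ht _)] using hts
      · simpa [Real.norm_eq_abs, abs_of_nonneg (ht _)] using hts
    have hle : ∑' p : ℕ × ℕ, -Real.log 2 * (t p.1 * t p.2) ≤ ∑' p, f p :=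
      Summable.tsum_le_tsum hpt (hg.mul_left _) hf
    rw [tsum_mul_left, htg, mul_one] at hle
    linarith
  · rw [tsum_eq_zero_of_not_summable hf]
    linarith
end

section
/- For any ε > 0 and any z ∈ ℂ, |∫₀¹ log⁺|z + ε·e^{2πit}| dt − log⁺|z|| ≤ ε. -/
open Real Complex

lemma log_sub_log_le_aux {x y : ℝ} (hy : 1 ≤ y) (hxy : y ≤ x) :
    Real.log x - Real.log y ≤ x - y := by
  have hy0 : 0 < y := lt_of_lt_of_le one_pos hy
  have hx0 : 0 < x := lt_of_lt_of_le hy0 hxy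
  have h := Real.log_le_sub_one_of_pos (div_pos hx0 hy0)
  rw [Real.log_div hx0.ne' hy0.ne'] at h
  have h2 : x / y - 1 = (x - y) / y := by field_simp
  rw [h2] at h
  calc Real.log x - Real.log y ≤ (x - y) / y := h
    _ ≤ x - y := div_le_self (by linarith) hy

lemma log_lip_aux {x y : ℝ} (hx : 1 ≤ x) (hy : 1 ≤ y) :
    |Real.log x - Real.log y| ≤ |x - y| := by
  rcases le_total y x with h | h
  · rw [_root_.abs_of_nonneg (sub_nonneg.2 (Real.log_le_log (by linarith) h)),
      _root_.abs_of_nonneg (by linarith)]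
    exact log_sub_log_le_aux hy h
  · rw [abs_sub_comm, abs_sub_comm x y,
      _root_.abs_of_nonneg (sub_nonneg.2 (Real.log_le_log (by linarith) h)),
      _root_.abs_of_nonneg (by linarith)]
    exact log_sub_log_le_aux hx h

lemma logplus_eq_aux {a : ℝ} (ha : 0 ≤ a) :
    max (Real.log a) 0 = Real.log (max a 1) := by
  rcases le_total a 1 with h | h
  · rw [max_eq_right h, Real.log_one, max_eq_right (Real.log_nonpos ha h)]
  · rw [max_eq_left h, max_eq_left (Real.log_nonneg h)]

lemma logplus_lip_aux {a b : ℝ} (ha : 0 ≤ a) (hb : 0 ≤ b) :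
    |max (Real.log a) 0 - max (Real.log b) 0| ≤ |a - b| := by
  rw [logplus_eq_aux ha, logplus_eq_aux hb]
  exact (log_lip_aux (le_max_right _ _) (le_max_right _ _)).trans
    (abs_max_sub_max_le_abs _ _ _)

/-- The change of `log⁺` under averaging over the circle of radius `ε`:
`|∫₀¹ log⁺|z + ε·e^{2πit}| dt − log⁺|z|| ≤ ε`. -/
theorem logplus_circle_average_close (ε : ℝ) (hε : 0 < ε) (z : ℂ) :
    |(∫ t in (0:ℝ)..1,
        max (Real.log (‖z + ε * Complex.exp (2 * Real.pi * Complex.I * t)‖)) 0)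
      - max (Real.log (‖z‖)) 0| ≤ ε := by
  set c := max (Real.log (‖z‖)) 0 with hc
  set g : ℝ → ℝ := fun t =>
    Real.log (max (‖z + ε * Complex.exp (2 * Real.pi * Complex.I * t)‖) 1) with hg
  have habs : ∀ t : ℝ,
      |‖z + ε * Complex.exp (2 * Real.pi * Complex.I * t)‖ - ‖z‖| ≤ ε := by
    intro t
    have h1 : ‖(ε : ℂ) * Complex.exp (2 * Real.pi * Complex.I * t)‖ = ε := by
      rw [norm_mul, Complex.norm_exp]
      have : (2 * (Real.pi : ℂ) * Complex.I * (t : ℂ)).re = 0 := by simp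
      rw [this]
      simp [abs_of_pos hε]
    calc |‖z + ε * Complex.exp (2 * Real.pi * Complex.I * t)‖ - ‖z‖|
        ≤ ‖(z + ε * Complex.exp (2 * Real.pi * Complex.I * t)) - z‖ := by
          simpa using
            abs_norm_sub_norm_le (z + ε * Complex.exp (2 * Real.pi * Complex.I * t)) z
      _ = ε := by rw [add_sub_cancel_left, h1]
  have key : ∀ t : ℝ, |g t - c| ≤ ε := by
    intro t
    have h := (logplus_lip_aux (norm_nonneg
        (z + ε * Complex.exp (2 * Real.pi * Complex.I * t))) (norm_nonneg z)).trans (habs t)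
    rw [logplus_eq_aux (norm_nonneg _)] at h
    simpa [hg, hc] using h
  have hcont : Continuous g := by
    apply Continuous.log
    · apply Continuous.max _ continuous_const
      exact continuous_norm.comp (by fun_prop)
    · intro t
      exact ne_of_gt (lt_of_lt_of_le one_pos (le_max_right _ _))
  have hInt : IntervalIntegrable g MeasureTheory.volume 0 1 := hcont.intervalIntegrable _ _
  have heq : (∫ t in (0:ℝ)..1,
        max (Real.log (‖z + ε * Complex.exp (2 * Real.pi * Complex.I * t)‖)) 0)
      = ∫ t in (0:ℝ)..1, g t :=
    intervalIntegral.integral_congr fun t _ => logplus_eq_aux (norm_nonneg _)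
  rw [heq]
  have hsplit : (∫ t in (0:ℝ)..1, g t) - c = ∫ t in (0:ℝ)..1, (g t - c) := by
    rw [intervalIntegral.integral_sub hInt (intervalIntegrable_const),
      intervalIntegral.integral_const]
    simp
  rw [hsplit]
  have := intervalIntegral.norm_integral_le_of_norm_le_const
    (C := ε) (f := fun t => g t - c) (a := (0:ℝ)) (b := 1)
    (fun t _ => by simpa [Real.norm_eq_abs] using key t)
  simpa using this
end
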